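/- arXiv:1809.06233 — 2 statements merged into one kernel-verified Lean document; each statement's English description precedes it below -/
import Mathlib

section
/- Uniform ADN theorem: Let γ be a precomplete numbering of a set S, and suppose δ : ℕ ⇀ ℕ is a partial computable diagonal function for γ. Then there exists a total computable function f : ℕ → ℕ such that for every e and n: (1) if φ_e(n) is defined then f(⟨e,n⟩) ~γ φ_e(n), and (2) if φ_e(n) is undefined then δ(f(⟨e,n⟩)) is undefined, where ⟨·,·⟩ is a computable pairing function. That is, for every fixed e the function n ↦ f(⟨e,n⟩) totalizes φ_e avoiding δ. -/
open Nat.Partrec (Code)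
open Nat.Partrec.Code Encodable Denumerable



/-- The `e`-th unary partial computable function, in the standard numbering via codes. -/
def phi (e : ℕ) : ℕ →. ℕ := (Denumerable.ofNat Nat.Partrec.Code e).eval

/-- A numbering `γ : ℕ → S` (a surjection) is precomplete if every partial computable
function can be totalized modulo `~γ`. -/
def Precomplete {S : Type*} (γ : ℕ → S) : Prop :=
  ∀ ψ : ℕ →. ℕ, Nat.Partrec ψ →
    ∃ f : ℕ → ℕ, Computable f ∧ ∀ n : ℕ, ∀ y ∈ ψ n, γ (f n) = γ y

/-- A partial function `δ` is a diagonal function for the numbering `γ` if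
`δ(x) ≁γ x` for every `x` in the domain of `δ`. -/
def DiagonalFn {S : Type*} (γ : ℕ → S) (δ : ℕ →. ℕ) : Prop :=
  ∀ x : ℕ, ∀ y ∈ δ x, γ y ≠ γ x

lemma mem_orElse_cases {α} {o₁ : Option α} {o₂ : Unit → Option α} {v : α}
    (h : v ∈ o₁.orElse o₂) : v ∈ o₁ ∨ v ∈ o₂ () := by
  cases o₁ <;> simp_all [Option.orElse]

lemma mem_orElse_left {α} {o₁ : Option α} {o₂ : Unit → Option α} {v : α}
    (h : v ∈ o₁) : v ∈ o₁.orElse o₂ := by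
  cases o₁ <;> simp_all [Option.orElse]

lemma mem_orElse_right {α} {o₁ : Option α} {o₂ : Unit → Option α} {v : α}
    (h : v ∈ o₂ ()) : ∃ w, w ∈ o₁.orElse o₂ := by
  cases o₁ <;> simp_all [Option.orElse]

/-- The uniform ADN theorem: a single total computable `f` such that for every `e`,
the function `n ↦ f ⟨e, n⟩` totalizes `φ_e` avoiding the diagonal function `δ`. -/
theorem visser_ADN_uniform {S : Type*} (γ : ℕ → S) (hsurj : Function.Surjective γ)
    (hpre : Precomplete γ) (δ : ℕ →. ℕ) (hδ : Nat.Partrec δ) (hdiag : DiagonalFn γ δ) :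
    ∃ f : ℕ → ℕ, Computable f ∧ ∀ e n : ℕ,
      (∀ y ∈ phi e n, γ (f (Nat.pair e n)) = γ y) ∧
      (¬ (phi e n).Dom → ¬ (δ (f (Nat.pair e n))).Dom) := by
  -- totalizer of the universal function
  have hU : Nat.Partrec (fun m => phi m.unpair.1 m.unpair.2) := by
    have : Partrec (fun m : ℕ => (Denumerable.ofNat Code m.unpair.1).eval m.unpair.2) :=
      eval_part.comp ((Computable.ofNat Code).comp
        (Primrec.fst.comp Primrec.unpair).to_comp)
        (Primrec.snd.comp Primrec.unpair).to_comp
    exact Partrec.nat_iff.mp this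
  obtain ⟨F, hF, hFspec⟩ := hpre _ hU
  obtain ⟨cδ, hcδ⟩ := exists_code.mp hδ
  -- the race function
  set Θ : Code → ℕ →. ℕ := fun c x => Nat.rfindOpt fun k =>
    (evaln k (Denumerable.ofNat Code x.unpair.1) x.unpair.2).orElse
      (fun _ => evaln k cδ (F (Nat.pair (encode c) x))) with hΘdef
  have hΘ : Partrec₂ Θ := by
    apply Partrec.rfindOpt
    have h1 : Computable fun p : (Code × ℕ) × ℕ =>
        evaln p.2 (Denumerable.ofNat Code p.1.2.unpair.1) p.1.2.unpair.2 :=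
      primrec_evaln.to_comp.comp
        ((Computable.snd.pair ((Computable.ofNat Code).comp
          (Primrec.fst.comp (Primrec.unpair.comp (Primrec.snd.comp Primrec.fst))).to_comp)).pair
          (Primrec.snd.comp (Primrec.unpair.comp (Primrec.snd.comp Primrec.fst))).to_comp)
    have h2 : Computable fun p : (Code × ℕ) × ℕ =>
        evaln p.2 cδ (F (Nat.pair (encode p.1.1) p.1.2)) :=
      primrec_evaln.to_comp.comp
        ((Computable.snd.pair (Computable.const cδ)).pair
          (hF.comp ((Primrec₂.natPair.comp
            (Primrec.encode.comp (Primrec.fst.comp Primrec.fst))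
            (Primrec.snd.comp Primrec.fst)).to_comp)))
    exact (Primrec.option_orElse.to_comp.comp h1 h2).to₂
  obtain ⟨c, hc⟩ := fixed_point₂ hΘ
  refine ⟨fun x => F (Nat.pair (encode c) x), hF.comp
    ((Primrec₂.natPair.comp (Primrec.const _) Primrec.id).to_comp), ?_⟩
  intro e n
  set x := Nat.pair e n with hx
  set a := F (Nat.pair (encode c) x) with ha
  -- γ (a) = γ v for v in eval c x
  have hfx : ∀ v ∈ c.eval x, γ a = γ v := by
    intro v hv
    have := hFspec (Nat.pair (encode c) x) v
    simp only [Nat.unpair_pair, phi, Denumerable.ofNat_encode] at this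
    exact this hv
  -- values of eval c x come from the race
  have key : ∀ v ∈ c.eval x, v ∈ phi e n ∨ v ∈ δ a := by
    intro v hv
    rw [hc] at hv
    obtain ⟨k, hk⟩ := Nat.rfindOpt_spec hv
    rcases mem_orElse_cases hk with h | h
    · left
      have := evaln_sound h
      simpa [phi, hx, Nat.unpair_pair] using this
    · right
      rw [← hcδ]
      exact evaln_sound h
  have nodelta : ∀ v ∈ c.eval x, v ∉ δ a := by
    intro v hv hvd
    exact hdiag a v hvd (hfx v hv).symm
  -- dom transfer
  have domL : (phi e n).Dom → (c.eval x).Dom := by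
    intro h
    obtain ⟨y, hy⟩ := Part.dom_iff_mem.mp h
    have : y ∈ (Denumerable.ofNat Code x.unpair.1).eval x.unpair.2 := by
      simpa [phi, hx, Nat.unpair_pair] using hy
    obtain ⟨k, hk⟩ := evaln_complete.mp this
    rw [hc]
    exact Nat.rfindOpt_dom.mpr ⟨k, y, mem_orElse_left hk⟩
  have domR : (δ a).Dom → (c.eval x).Dom := by
    intro h
    obtain ⟨y, hy⟩ := Part.dom_iff_mem.mp h
    rw [← hcδ] at hy
    obtain ⟨k, hk⟩ := evaln_complete.mp hy
    rw [hc]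
    obtain ⟨w, hw⟩ := mem_orElse_right (o₁ := evaln k (Denumerable.ofNat Code x.unpair.1) x.unpair.2) (o₂ := fun _ => evaln k cδ (F (Nat.pair (encode c) x))) hk
    exact Nat.rfindOpt_dom.mpr ⟨k, w, hw⟩
  constructor
  · intro y hy
    have hd := domL (Part.dom_iff_mem.mpr ⟨y, hy⟩)
    have hv : (c.eval x).get hd ∈ c.eval x := Part.get_mem hd
    rcases key _ hv with h | h
    · rw [hfx _ hv, Part.mem_unique h hy]
    · exact absurd h (nodelta _ hv)
  · intro hnd hd
    have hdx := domR hd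
    have hv : (c.eval x).get hdx ∈ c.eval x := Part.get_mem hdx
    rcases key _ hv with h | h
    · exact hnd (Part.dom_iff_mem.mpr ⟨_, h⟩)
    · exact absurd h (nodelta _ hv)
end

section
/- Arslanov's completeness criterion for precomplete numberings: Suppose γ is a precomplete numbering of a set S, and A ⊆ ℕ is a computably enumerable set such that the halting set ∅' is not Turing reducible to A. If g : ℕ → ℕ is a total function that is Turing reducible to A, then g has a fixed point modulo ~γ, i.e. there exists n ∈ ℕ such that g(n) ~γ n. -/
/-- The halting set `∅' = {e : φ_e(e) is defined}`. -/
def haltingSet : Set ℕ := {e : ℕ | (phi e e).Dom}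

open Classical in
/-- The characteristic function of a set `A ⊆ ℕ`, as a (total) partial function. -/
noncomputable def chi (A : Set ℕ) : ℕ →. ℕ :=
  fun n => Part.some (if n ∈ A then 1 else 0)

/-- Partial functions computable relative to an oracle `O : ℕ →. ℕ`: the relativized
version of `Nat.Partrec`. -/
inductive RecursiveInOracle (O : ℕ →. ℕ) : (ℕ →. ℕ) → Prop
  | oracle : RecursiveInOracle O O
  | zero : RecursiveInOracle O (pure 0)
  | succ : RecursiveInOracle O Nat.succ
  | left : RecursiveInOracle O ↑fun n : ℕ => n.unpair.1
  | right : RecursiveInOracle O ↑fun n : ℕ => n.unpair.2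
  | pair {f g : ℕ →. ℕ} : RecursiveInOracle O f → RecursiveInOracle O g →
      RecursiveInOracle O fun n => Nat.pair <$> f n <*> g n
  | comp {f g : ℕ →. ℕ} : RecursiveInOracle O f → RecursiveInOracle O g →
      RecursiveInOracle O fun n => g n >>= f
  | prec {f g : ℕ →. ℕ} : RecursiveInOracle O f → RecursiveInOracle O g →
      RecursiveInOracle O (Nat.unpaired fun a n =>
        n.rec (f a) fun y IH => do let i ← IH; g (Nat.pair a (Nat.pair y i)))
  | rfind {f : ℕ →. ℕ} : RecursiveInOracle O f →
      RecursiveInOracle O fun a => Nat.rfind fun n => (fun m => m = 0) <$> f (Nat.pair a n)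

/-- A set `A ⊆ ℕ` is computably enumerable if it is the domain of a partial
computable function. -/
def CE (A : Set ℕ) : Prop := ∃ ψ : ℕ →. ℕ, Nat.Partrec ψ ∧ ∀ n, n ∈ A ↔ (ψ n).Dom

namespace ArslanovProof

/-- `D s q` agrees with `A` below `u` (given that `D · q` only ever says `true`
for elements of `A`). -/
def Agr (A : Set ℕ) (D : ℕ → ℕ → Bool) (s u : ℕ) : Prop :=
  ∀ q < u, q ∈ A → D s q = true

section Agr

variable {A : Set ℕ} {D : ℕ → ℕ → Bool}

lemma agr_mono (hDmono : ∀ s s' n, s ≤ s' → D s n = true → D s' n = true)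
    {s s' u : ℕ} (h : s ≤ s') (ha : Agr A D s u) : Agr A D s' u :=
  fun q hq hqA => hDmono _ _ _ h (ha q hq hqA)

lemma agr_anti {s u u' : ℕ} (h : u' ≤ u) (ha : Agr A D s u) : Agr A D s u' :=
  fun q hq hqA => ha q (lt_of_lt_of_le hq h) hqA

lemma agr_max {s u1 u2 : ℕ} (h1 : Agr A D s u1) (h2 : Agr A D s u2) :
    Agr A D s (max u1 u2) :=
  fun q hq hqA => (lt_max_iff.mp hq).elim (fun h => h1 q h hqA) fun h => h2 q h hqA

lemma agr_zero (s : ℕ) : Agr A D s 0 := fun q hq => absurd hq (Nat.not_lt_zero q)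

lemma agr_exists (hDmono : ∀ s s' n, s ≤ s' → D s n = true → D s' n = true)
    (hDcompl : ∀ n, n ∈ A → ∃ s, D s n = true) :
    ∀ u, ∃ s, Agr A D s u := by
  intro u
  induction u with
  | zero => exact ⟨0, agr_zero 0⟩
  | succ u ih =>
    obtain ⟨s, hs⟩ := ih
    by_cases hu : u ∈ A
    · obtain ⟨s', hs'⟩ := hDcompl u hu
      refine ⟨max s s', fun q hq hqA => ?_⟩
      rcases Nat.lt_succ_iff_lt_or_eq.mp hq with h | rfl
      · exact hDmono _ _ _ (le_max_left _ _) (hs q h hqA)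
      · exact hDmono _ _ _ (le_max_right _ _) hs'
    · refine ⟨s, fun q hq hqA => ?_⟩
      rcases Nat.lt_succ_iff_lt_or_eq.mp hq with h | rfl
      · exact hs q h hqA
      · exact absurd hqA hu

/-- If `A` and `D s ·` agree below `u`, then `D` is frozen below `u` from `s` on. -/
lemma agr_freeze (hDsub : ∀ s n, D s n = true → n ∈ A)
    (hDmono : ∀ s s' n, s ≤ s' → D s n = true → D s' n = true)
    {s s' u : ℕ} (h : s ≤ s') (ha : Agr A D s u) :
    ∀ q < u, D s' q = D s q := by
  intro q hq
  cases hDq : D s q with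
  | true => exact hDmono _ _ _ h hDq
  | false =>
    cases hDq' : D s' q with
    | true => exact absurd (ha q hq (hDsub _ _ hDq')) (by simp [hDq])
    | false => rfl

end Agr

/-- `H` is a stagewise (computable) approximation of the `χ_A`-partial-computable
function `h`: whenever the stage-`t` computation converges with a value and a use
on which `D t` already agrees with `A`, the value is correct and the computation is
stable from `t` on; and every convergent true computation is eventually achieved at
a stage whose oracle approximation is correct on the use. -/
def IsApprox (A : Set ℕ) (D : ℕ → ℕ → Bool) (h : ℕ →. ℕ)
    (H : ℕ → ℕ → Option (ℕ × ℕ)) : Prop :=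
  (∀ t n v u, H t n = some (v, u) → Agr A D t u →
      v ∈ h n ∧ ∀ s, t ≤ s → H s n = some (v, u)) ∧
  (∀ n, (h n).Dom → ∃ t v u, H t n = some (v, u) ∧ Agr A D t u)


section Cases

variable {A : Set ℕ} {D : ℕ → ℕ → Bool}

/-- A helper: membership in `Nat.pair <$> p <*> q`. -/
lemma mem_pairSeq {p q : Part ℕ} {v : ℕ} :
    v ∈ (Nat.pair <$> p <*> q) ↔ ∃ a ∈ p, ∃ b ∈ q, Nat.pair a b = v := by
  simp [Seq.seq, Part.mem_map_iff, Part.mem_bind_iff]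

lemma dom_pairSeq {p q : Part ℕ} :
    (Nat.pair <$> p <*> q).Dom ↔ p.Dom ∧ q.Dom := by
  constructor
  · intro hd
    obtain ⟨v, hv⟩ := Part.dom_iff_mem.mp hd
    obtain ⟨a, ha, b, hb, _⟩ := mem_pairSeq.mp hv
    exact ⟨Part.dom_iff_mem.mpr ⟨a, ha⟩, Part.dom_iff_mem.mpr ⟨b, hb⟩⟩
  · rintro ⟨hp, hq⟩
    exact Part.dom_iff_mem.mpr ⟨_, mem_pairSeq.mpr
      ⟨_, Part.get_mem hp, _, Part.get_mem hq, rfl⟩⟩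

lemma isApprox_oracle (hDsub : ∀ s n, D s n = true → n ∈ A)
    (hDmono : ∀ s s' n, s ≤ s' → D s n = true → D s' n = true)
    (hDcompl : ∀ n, n ∈ A → ∃ s, D s n = true) :
    IsApprox A D (chi A) (fun s n => some (cond (D s n) 1 0, n + 1)) := by
  constructor
  · intro t n v u heq hag
    simp only [Option.some.injEq, Prod.mk.injEq] at heq
    obtain ⟨hv, hu⟩ := heq
    subst hv; subst hu
    constructor
    · show (cond (D t n) 1 0 : ℕ) ∈ chi A n
      classical
      by_cases hn : n ∈ A
      · have hD : D t n = true := hag n (Nat.lt_succ_self n) hn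
        simp [chi, hD, hn]
      · have hD : D t n = false := by
          cases hD : D t n with
          | true => exact absurd (hDsub _ _ hD) hn
          | false => rfl
        simp [chi, hD, hn]
    · intro s hs
      have : D s n = D t n := agr_freeze hDsub hDmono hs hag n (Nat.lt_succ_self n)
      simp [this]
  · intro n _
    obtain ⟨t, ht⟩ := agr_exists hDmono hDcompl (n + 1)
    exact ⟨t, _, _, rfl, ht⟩

lemma isApprox_total (f : ℕ → ℕ) :
    IsApprox A D (↑f) (fun _ n => some (f n, 0)) := by
  constructor
  · intro t n v u heq _
    simp only [Option.some.injEq, Prod.mk.injEq] at heq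
    obtain ⟨hv, hu⟩ := heq
    subst hv; subst hu
    exact ⟨by rw [PFun.coe_val]; exact Part.mem_some _, fun s _ => rfl⟩
  · intro n _
    exact ⟨0, f n, 0, rfl, agr_zero 0⟩

lemma isApprox_zero : IsApprox A D (pure 0) (fun _ _ => some (0, 0)) := by
  constructor
  · intro t n v u heq _
    simp only [Option.some.injEq, Prod.mk.injEq] at heq
    obtain ⟨hv, hu⟩ := heq
    subst hv; subst hu
    exact ⟨Part.mem_some _, fun s _ => rfl⟩
  · intro n _
    exact ⟨0, 0, 0, rfl, agr_zero 0⟩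

def pairH (Hf Hg : ℕ → ℕ → Option (ℕ × ℕ)) : ℕ → ℕ → Option (ℕ × ℕ) :=
  fun s n => (Hf s n).bind fun p => (Hg s n).map fun q => (Nat.pair p.1 q.1, max p.2 q.2)

lemma pairH_eq_some {Hf Hg : ℕ → ℕ → Option (ℕ × ℕ)} {s n : ℕ} {r : ℕ × ℕ} :
    pairH Hf Hg s n = some r ↔
      ∃ p q, Hf s n = some p ∧ Hg s n = some q ∧
        r = (Nat.pair p.1 q.1, max p.2 q.2) := by
  simp only [pairH, Option.bind_eq_some_iff, Option.map_eq_some_iff]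
  constructor
  · rintro ⟨p, hp, q, hq, rfl⟩; exact ⟨p, q, hp, hq, rfl⟩
  · rintro ⟨p, q, hp, hq, rfl⟩; exact ⟨p, hp, q, hq, rfl⟩

lemma isApprox_pair (hDmono : ∀ s s' n, s ≤ s' → D s n = true → D s' n = true)
    {f g : ℕ →. ℕ} {Hf Hg : ℕ → ℕ → Option (ℕ × ℕ)}
    (hf : IsApprox A D f Hf) (hg : IsApprox A D g Hg) :
    IsApprox A D (fun n => Nat.pair <$> f n <*> g n) (pairH Hf Hg) := by
  obtain ⟨fs, fc⟩ := hf
  obtain ⟨gs, gc⟩ := hg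
  constructor
  · intro t n v u heq hag
    obtain ⟨p, q, hp, hq, hr⟩ := pairH_eq_some.mp heq
    have h1 := fs t n p.1 p.2 (by rw [hp]) (agr_anti (by simp [Prod.mk.injEq] at hr; omega) hag)
    have h2 := gs t n q.1 q.2 (by rw [hq]) (agr_anti (by simp [Prod.mk.injEq] at hr; omega) hag)
    constructor
    · have : v = Nat.pair p.1 q.1 := by simp [Prod.mk.injEq] at hr; omega
      rw [this]
      exact mem_pairSeq.mpr ⟨p.1, h1.1, q.1, h2.1, rfl⟩
    · intro s hs
      rw [pairH_eq_some]
      exact ⟨p, q, h1.2 s hs, h2.2 s hs, hr⟩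
  · intro n hdom
    rw [dom_pairSeq] at hdom
    obtain ⟨t1, v1, u1, h1, ha1⟩ := fc n hdom.1
    obtain ⟨t2, v2, u2, h2, ha2⟩ := gc n hdom.2
    have s1 := fs t1 n v1 u1 h1 ha1
    have s2 := gs t2 n v2 u2 h2 ha2
    refine ⟨max t1 t2, Nat.pair v1 v2, max u1 u2, ?_, ?_⟩
    · rw [pairH_eq_some]
      exact ⟨(v1, u1), (v2, u2), s1.2 _ (le_max_left _ _), s2.2 _ (le_max_right _ _), rfl⟩
    · exact agr_max (agr_mono hDmono (le_max_left _ _) ha1)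
        (agr_mono hDmono (le_max_right _ _) ha2)

def compH (Hf Hg : ℕ → ℕ → Option (ℕ × ℕ)) : ℕ → ℕ → Option (ℕ × ℕ) :=
  fun s n => (Hg s n).bind fun p => (Hf s p.1).map fun q => (q.1, max p.2 q.2)

lemma compH_eq_some {Hf Hg : ℕ → ℕ → Option (ℕ × ℕ)} {s n : ℕ} {r : ℕ × ℕ} :
    compH Hf Hg s n = some r ↔
      ∃ p q, Hg s n = some p ∧ Hf s p.1 = some q ∧ r = (q.1, max p.2 q.2) := by
  simp only [compH, Option.bind_eq_some_iff, Option.map_eq_some_iff]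
  constructor
  · rintro ⟨p, hp, q, hq, rfl⟩; exact ⟨p, q, hp, hq, rfl⟩
  · rintro ⟨p, q, hp, hq, rfl⟩; exact ⟨p, hp, q, hq, rfl⟩

lemma isApprox_comp (hDmono : ∀ s s' n, s ≤ s' → D s n = true → D s' n = true)
    {f g : ℕ →. ℕ} {Hf Hg : ℕ → ℕ → Option (ℕ × ℕ)}
    (hf : IsApprox A D f Hf) (hg : IsApprox A D g Hg) :
    IsApprox A D (fun n => g n >>= f) (compH Hf Hg) := by
  obtain ⟨fs, fc⟩ := hf
  obtain ⟨gs, gc⟩ := hg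
  constructor
  · intro t n v u heq hag
    obtain ⟨p, q, hp, hq, hr⟩ := compH_eq_some.mp heq
    have h1 := gs t n p.1 p.2 (by rw [hp]) (agr_anti (by simp [Prod.mk.injEq] at hr; omega) hag)
    have h2 := fs t p.1 q.1 q.2 (by rw [hq]) (agr_anti (by simp [Prod.mk.injEq] at hr; omega) hag)
    constructor
    · have : v = q.1 := by simp [Prod.mk.injEq] at hr; omega
      rw [this]
      exact Part.mem_bind_iff.mpr ⟨p.1, h1.1, h2.1⟩
    · intro s hs
      rw [compH_eq_some]
      exact ⟨p, q, h1.2 s hs, h2.2 s hs, hr⟩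
  · intro n hdom
    simp only [Part.bind_dom] at hdom
    obtain ⟨hgd, hfd⟩ := hdom
    obtain ⟨t1, v1, u1, h1, ha1⟩ := gc n hgd
    have s1 := gs t1 n v1 u1 h1 ha1
    have hv1 : v1 = (g n).get hgd := (Part.get_eq_of_mem s1.1 hgd).symm
    obtain ⟨t2, v2, u2, h2, ha2⟩ := fc ((g n).get hgd) hfd
    have s2 := fs t2 _ v2 u2 h2 ha2
    refine ⟨max t1 t2, v2, max u1 u2, ?_, ?_⟩
    · rw [compH_eq_some]
      refine ⟨(v1, u1), (v2, u2), s1.2 _ (le_max_left _ _), ?_, rfl⟩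
      rw [show (v1, u1).1 = v1 from rfl, hv1]
      exact s2.2 _ (le_max_right _ _)
    · exact agr_max (agr_mono hDmono (le_max_left _ _) ha1)
        (agr_mono hDmono (le_max_right _ _) ha2)

end Cases


section Prec

variable {A : Set ℕ} {D : ℕ → ℕ → Bool}

/-- Stage approximation for primitive recursion. -/
def pK (Hf Hg : ℕ → ℕ → Option (ℕ × ℕ)) (s a : ℕ) : ℕ → Option (ℕ × ℕ)
  | 0 => Hf s a
  | n + 1 => (pK Hf Hg s a n).bind fun p =>
      (Hg s (Nat.pair a (Nat.pair n p.1))).map fun q => (q.1, max p.2 q.2)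

def precH (Hf Hg : ℕ → ℕ → Option (ℕ × ℕ)) : ℕ → ℕ → Option (ℕ × ℕ) :=
  fun s m => pK Hf Hg s m.unpair.1 m.unpair.2

/-- The function computed by primitive recursion, in curried form. -/
def precP (f g : ℕ →. ℕ) (a : ℕ) : ℕ → Part ℕ
  | 0 => f a
  | n + 1 => (precP f g a n).bind fun i => g (Nat.pair a (Nat.pair n i))

lemma precP_eq (f g : ℕ →. ℕ) (m : ℕ) :
    (Nat.unpaired fun a n =>
        n.rec (f a) fun y IH => do let i ← IH; g (Nat.pair a (Nat.pair y i))) m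
      = precP f g m.unpair.1 m.unpair.2 := by
  simp only [Nat.unpaired]
  generalize m.unpair.1 = a
  generalize m.unpair.2 = n
  induction n with
  | zero => rfl
  | succ n ih =>
    simp only [precP]
    rw [← ih]
    rfl

lemma pK_sound {f g : ℕ →. ℕ} {Hf Hg : ℕ → ℕ → Option (ℕ × ℕ)}
    (hf : IsApprox A D f Hf) (hg : IsApprox A D g Hg) :
    ∀ n a t v u, pK Hf Hg t a n = some (v, u) → Agr A D t u →
      v ∈ precP f g a n ∧ ∀ s, t ≤ s → pK Hf Hg s a n = some (v, u) := by
  intro n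
  induction n with
  | zero =>
    intro a t v u heq hag
    exact ⟨(hf.1 t a v u heq hag).1, fun s hs => (hf.1 t a v u heq hag).2 s hs⟩
  | succ n ih =>
    intro a t v u heq hag
    simp only [pK, Option.bind_eq_some_iff, Option.map_eq_some_iff] at heq
    obtain ⟨p, hp, q, hq, hr⟩ := heq
    have hru : u = max p.2 q.2 := by
      have := congrArg Prod.snd hr; simpa using this.symm
    have hrv : v = q.1 := by
      have := congrArg Prod.fst hr; simpa using this.symm
    have h1 := ih a t p.1 p.2 (by rw [← hp]) (agr_anti (hru ▸ le_max_left _ _) hag)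
    have h2 := hg.1 t _ q.1 q.2 (by rw [← hq]) (agr_anti (hru ▸ le_max_right _ _) hag)
    constructor
    · rw [hrv]
      exact Part.mem_bind_iff.mpr ⟨p.1, h1.1, h2.1⟩
    · intro s hs
      simp only [pK, Option.bind_eq_some_iff, Option.map_eq_some_iff]
      exact ⟨p, (h1.2 s hs) ▸ (by cases p; rfl), q, (h2.2 s hs) ▸ (by cases q; rfl), hr⟩

lemma pK_complete (hDmono : ∀ s s' n, s ≤ s' → D s n = true → D s' n = true)
    {f g : ℕ →. ℕ} {Hf Hg : ℕ → ℕ → Option (ℕ × ℕ)}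
    (hf : IsApprox A D f Hf) (hg : IsApprox A D g Hg) :
    ∀ n a, (precP f g a n).Dom →
      ∃ t v u, pK Hf Hg t a n = some (v, u) ∧ Agr A D t u := by
  intro n
  induction n with
  | zero => intro a hdom; exact hf.2 a hdom
  | succ n ih =>
    intro a hdom
    obtain ⟨h1, h2⟩ := hdom
    obtain ⟨t1, v1, u1, heq1, ha1⟩ := ih a h1
    have s1 := pK_sound hf hg n a t1 v1 u1 heq1 ha1
    have hv1 : v1 = (precP f g a n).get h1 := (Part.get_eq_of_mem s1.1 h1).symm
    obtain ⟨t2, v2, u2, heq2, ha2⟩ := hg.2 _ h2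
    have s2 := hg.1 t2 _ v2 u2 heq2 ha2
    refine ⟨max t1 t2, v2, max u1 u2, ?_, ?_⟩
    · simp only [pK, Option.bind_eq_some_iff, Option.map_eq_some_iff]
      refine ⟨(v1, u1), s1.2 _ (le_max_left _ _), (v2, u2), ?_, rfl⟩
      rw [show ((v1:ℕ), (u1:ℕ)).1 = v1 from rfl, hv1]
      exact s2.2 _ (le_max_right _ _)
    · exact agr_max (agr_mono hDmono (le_max_left _ _) ha1)
        (agr_mono hDmono (le_max_right _ _) ha2)

lemma isApprox_prec (hDmono : ∀ s s' n, s ≤ s' → D s n = true → D s' n = true)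
    {f g : ℕ →. ℕ} {Hf Hg : ℕ → ℕ → Option (ℕ × ℕ)}
    (hf : IsApprox A D f Hf) (hg : IsApprox A D g Hg) :
    IsApprox A D
      (Nat.unpaired fun a n =>
        n.rec (f a) fun y IH => do let i ← IH; g (Nat.pair a (Nat.pair y i)))
      (precH Hf Hg) := by
  constructor
  · intro t m v u heq hag
    have := pK_sound hf hg m.unpair.2 m.unpair.1 t v u heq hag
    exact ⟨by rw [precP_eq]; exact this.1, this.2⟩
  · intro m hdom
    rw [precP_eq] at hdom
    exact pK_complete hDmono hf hg m.unpair.2 m.unpair.1 hdom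

end Prec


section Rfind

variable {A : Set ℕ} {D : ℕ → ℕ → Bool}

/-- One step of the staged search for `rfind`: state is either `inl umax`
(still searching, `umax` = max use so far) or `inr r` (finished with result `r`). -/
def rstep (Hf : ℕ → ℕ → Option (ℕ × ℕ)) (s a n : ℕ) :
    ℕ ⊕ Option (ℕ × ℕ) → ℕ ⊕ Option (ℕ × ℕ)
  | Sum.inl umax =>
      match Hf s (Nat.pair a n) with
      | none => Sum.inr none
      | some p =>
          if p.1 = 0 then Sum.inr (some (n, max umax p.2)) else Sum.inl (max umax p.2)
  | Sum.inr r => Sum.inr r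

def riter (Hf : ℕ → ℕ → Option (ℕ × ℕ)) (s a : ℕ) : ℕ → ℕ ⊕ Option (ℕ × ℕ)
  | 0 => Sum.inl 0
  | k + 1 => rstep Hf s a k (riter Hf s a k)

def rfindH (Hf : ℕ → ℕ → Option (ℕ × ℕ)) : ℕ → ℕ → Option (ℕ × ℕ) :=
  fun s a => Sum.elim (fun _ => none) id (riter Hf s a s)

variable {Hf : ℕ → ℕ → Option (ℕ × ℕ)}

lemma riter_absorb {s a k : ℕ} {r : Option (ℕ × ℕ)}
    (h : riter Hf s a k = Sum.inr r) : ∀ k', k ≤ k' → riter Hf s a k' = Sum.inr r := by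
  intro k' hk
  induction k' , hk using Nat.le_induction with
  | base => exact h
  | succ k' hk ih => simp only [riter, ih, rstep]

lemma riter_inl {s a : ℕ} : ∀ {k umax : ℕ}, riter Hf s a k = Sum.inl umax →
    ∀ m < k, ∃ v u, Hf s (Nat.pair a m) = some (v, u) ∧ v ≠ 0 ∧ u ≤ umax := by
  intro k
  induction k with
  | zero => intro umax _ m hm; exact absurd hm (Nat.not_lt_zero m)
  | succ k ih =>
    intro umax heq m hm
    rw [riter] at heq
    cases hstate : riter Hf s a k with
    | inr r => rw [hstate] at heq; simp [rstep] at heq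
    | inl w =>
      rw [hstate] at heq
      cases hHf : Hf s (Nat.pair a k) with
      | none => simp [rstep, hHf] at heq
      | some p =>
        by_cases hp : p.1 = 0
        · simp [rstep, hHf, hp] at heq
        · simp only [rstep, hHf, if_neg hp, Sum.inl.injEq] at heq
          rcases Nat.lt_succ_iff_lt_or_eq.mp hm with hmk | rfl
          · obtain ⟨v, u, h1, h2, h3⟩ := ih hstate m hmk
            exact ⟨v, u, h1, h2, le_trans h3 (le_trans (le_max_left _ _) heq.le)⟩
          · exact ⟨p.1, p.2, by rw [hHf], hp, le_trans (le_max_right _ _) heq.le⟩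

lemma riter_inr {s a : ℕ} : ∀ {k n U : ℕ},
    riter Hf s a k = Sum.inr (some (n, U)) →
    n < k ∧ (∃ u, u ≤ U ∧ Hf s (Nat.pair a n) = some (0, u)) ∧
      (∀ m < n, ∃ v u, Hf s (Nat.pair a m) = some (v, u) ∧ v ≠ 0 ∧ u ≤ U) ∧
      riter Hf s a (n + 1) = Sum.inr (some (n, U)) := by
  intro k
  induction k with
  | zero => intro n U heq; simp [riter] at heq
  | succ k ih =>
    intro n U heq
    rw [riter] at heq
    cases hstate : riter Hf s a k with
    | inr r =>
      rw [hstate] at heq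
      simp only [rstep, Sum.inr.injEq] at heq
      subst heq
      obtain ⟨h1, h2, h3, h4⟩ := ih hstate
      exact ⟨Nat.lt_succ_of_lt h1, h2, h3, h4⟩
    | inl w =>
      rw [hstate] at heq
      cases hHf : Hf s (Nat.pair a k) with
      | none => simp [rstep, hHf] at heq
      | some p =>
        by_cases hp : p.1 = 0
        · simp only [rstep, hHf, if_pos hp, Sum.inr.injEq, Option.some.injEq,
            Prod.mk.injEq] at heq
          obtain ⟨rfl, rfl⟩ := heq
          refine ⟨Nat.lt_succ_self k, ⟨p.2, le_max_right _ _, by rw [hHf, ← hp]⟩,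
            fun m hm => ?_, ?_⟩
          · obtain ⟨v, u, h1, h2, h3⟩ := riter_inl hstate m hm
            exact ⟨v, u, h1, h2, le_trans h3 (le_max_left _ _)⟩
          · rw [riter, hstate]
            simp [rstep, hHf, hp]
        · simp [rstep, hHf, hp] at heq

lemma riter_congr {s s' a : ℕ} : ∀ {k : ℕ},
    (∀ m < k, Hf s (Nat.pair a m) = Hf s' (Nat.pair a m)) →
    riter Hf s a k = riter Hf s' a k := by
  intro k
  induction k with
  | zero => intro _; rfl
  | succ k ih =>
    intro h
    rw [riter, riter, ih (fun m hm => h m (Nat.lt_succ_of_lt hm))]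
    cases riter Hf s' a k with
    | inl w => simp only [rstep, h k (Nat.lt_succ_self k)]
    | inr r => rfl

lemma riter_build_inl {s a : ℕ} : ∀ {k : ℕ},
    (∀ m < k, ∃ v u, Hf s (Nat.pair a m) = some (v, u) ∧ v ≠ 0 ∧ Agr A D s u) →
    ∃ U, riter Hf s a k = Sum.inl U ∧ Agr A D s U := by
  intro k
  induction k with
  | zero => intro _; exact ⟨0, rfl, agr_zero s⟩
  | succ k ih =>
    intro h
    obtain ⟨U, hU, hagU⟩ := ih (fun m hm => h m (Nat.lt_succ_of_lt hm))
    obtain ⟨v, u, h1, h2, h3⟩ := h k (Nat.lt_succ_self k)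
    refine ⟨max U u, ?_, agr_max hagU h3⟩
    rw [riter, hU]
    simp [rstep, h1, h2]

lemma riter_build {s a n : ℕ}
    (h : ∀ m < n, ∃ v u, Hf s (Nat.pair a m) = some (v, u) ∧ v ≠ 0 ∧ Agr A D s u)
    {u : ℕ} (h0 : Hf s (Nat.pair a n) = some (0, u)) (hagu : Agr A D s u) :
    ∃ U, riter Hf s a (n + 1) = Sum.inr (some (n, U)) ∧ Agr A D s U := by
  obtain ⟨U, hU, hagU⟩ := riter_build_inl h
  refine ⟨max U u, ?_, agr_max hagU hagu⟩
  rw [riter, hU]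
  simp [rstep, h0]

end Rfind


section RfindApprox

variable {A : Set ℕ} {D : ℕ → ℕ → Bool}

lemma isApprox_rfind (hDmono : ∀ s s' n, s ≤ s' → D s n = true → D s' n = true)
    {f : ℕ →. ℕ} {Hf : ℕ → ℕ → Option (ℕ × ℕ)} (hf : IsApprox A D f Hf) :
    IsApprox A D (fun a => Nat.rfind fun n => (fun m => m = 0) <$> f (Nat.pair a n))
      (rfindH Hf) := by
  constructor
  · -- soundness
    intro t a v U heq hag
    have hiter : riter Hf t a t = Sum.inr (some (v, U)) := by
      unfold rfindH at heq
      cases hst : riter Hf t a t with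
      | inl w => rw [hst] at heq; simp at heq
      | inr r => rw [hst] at heq; simp at heq; rw [heq]
    obtain ⟨hvt, ⟨u0, hu0U, h0⟩, hbel, hterm⟩ := riter_inr hiter
    -- sound values for all entries
    have s0 := hf.1 t (Nat.pair a v) 0 u0 h0 (agr_anti hu0U hag)
    have sbel : ∀ m (hm : m < v), ∃ vm um, Hf t (Nat.pair a m) = some (vm, um) ∧ vm ≠ 0 ∧
        vm ∈ f (Nat.pair a m) ∧ ∀ s, t ≤ s → Hf s (Nat.pair a m) = some (vm, um) := by
      intro m hm
      obtain ⟨vm, um, h1, h2, h3⟩ := hbel m hm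
      have := hf.1 t _ vm um h1 (agr_anti h3 hag)
      exact ⟨vm, um, h1, h2, this.1, this.2⟩
    constructor
    · -- v ∈ rfind
      set p : ℕ →. Bool := fun n => (fun m => decide (m = 0)) <$> f (Nat.pair a n) with hp
      have hdom : (Nat.rfind p).Dom := by
        rw [Nat.rfind_dom]
        refine ⟨v, ?_, fun {m} hm => ?_⟩
        · exact (Part.mem_map_iff _).mpr ⟨0, s0.1, by simp⟩
        · obtain ⟨vm, um, _, _, h3, _⟩ := sbel m hm
          exact Part.dom_iff_mem.mpr ⟨_, (Part.mem_map_iff _).mpr ⟨vm, h3, rfl⟩⟩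
      have hmem := Part.get_mem hdom
      set n' := (Nat.rfind p).get hdom with hn'
      have : n' = v := by
        rcases lt_trichotomy n' v with h | h | h
        · obtain ⟨vm, um, _, h2, h3, _⟩ := sbel n' h
          have htrue := Nat.rfind_spec hmem
          obtain ⟨w, hw, hdec⟩ := (Part.mem_map_iff _).mp htrue
          have : w = vm := Part.mem_unique hw h3
          subst this
          simp at hdec
          exact absurd hdec h2
        · exact h
        · have hfalse := Nat.rfind_min hmem h
          obtain ⟨w, hw, hdec⟩ := (Part.mem_map_iff _).mp hfalse
          have : w = 0 := Part.mem_unique hw s0.1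
          subst this
          simp at hdec
      exact this ▸ hmem
    · -- stability
      intro s hs
      have hcong : ∀ m < v + 1, Hf t (Nat.pair a m) = Hf s (Nat.pair a m) := by
        intro m hm
        rcases Nat.lt_succ_iff_lt_or_eq.mp hm with hmv | rfl
        · obtain ⟨vm, um, h1, _, _, h4⟩ := sbel m hmv
          rw [h1, h4 s hs]
        · rw [h0, s0.2 s hs]
      have : riter Hf s a (v + 1) = Sum.inr (some (v, U)) := by
        rw [← riter_congr hcong]; exact hterm
      have habs := riter_absorb this s (le_trans (Nat.succ_le_of_lt hvt) hs)
      unfold rfindH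
      rw [habs]; rfl
  · -- completeness
    intro a hdom
    set p : ℕ →. Bool := fun n => (fun m => decide (m = 0)) <$> f (Nat.pair a n) with hp
    have hdom' : (Nat.rfind p).Dom := hdom
    set n0 := (Nat.rfind p).get hdom' with hn0
    have hmem : n0 ∈ Nat.rfind p := Part.get_mem hdom'
    have h0 : (0 : ℕ) ∈ f (Nat.pair a n0) := by
      have := Nat.rfind_spec hmem
      obtain ⟨w, hw, hdec⟩ := (Part.mem_map_iff _).mp this
      simp at hdec
      exact hdec ▸ hw
    have hbel : ∀ m, m < n0 → ∃ w, w ∈ f (Nat.pair a m) ∧ w ≠ 0 := by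
      intro m hm
      have := Nat.rfind_min hmem hm
      obtain ⟨w, hw, hdec⟩ := (Part.mem_map_iff _).mp this
      simp at hdec
      exact ⟨w, hw, hdec⟩
    have hex : ∀ m, ∃ t v u, m ≤ n0 →
        Hf t (Nat.pair a m) = some (v, u) ∧ Agr A D t u := by
      intro m
      by_cases hm : m ≤ n0
      · rcases Nat.lt_or_ge m n0 with h | h
        · obtain ⟨w, hw, _⟩ := hbel m h
          obtain ⟨t, v, u, h1, h2⟩ := hf.2 _ (Part.dom_iff_mem.mpr ⟨w, hw⟩)
          exact ⟨t, v, u, fun _ => ⟨h1, h2⟩⟩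
        · have : m = n0 := le_antisymm hm h
          subst this
          obtain ⟨t, v, u, h1, h2⟩ := hf.2 _ (Part.dom_iff_mem.mpr ⟨0, h0⟩)
          exact ⟨t, v, u, fun _ => ⟨h1, h2⟩⟩
      · exact ⟨0, 0, 0, fun h => absurd h hm⟩
    choose T V W hTVW using hex
    set t : ℕ := max (n0 + 1) ((Finset.range (n0 + 1)).sup T) with ht
    have hTle : ∀ m, m ≤ n0 → T m ≤ t := by
      intro m hm
      exact le_trans (Finset.le_sup (Finset.mem_range.mpr (Nat.lt_succ_of_le hm)))
        (le_max_right _ _)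
    have hstable : ∀ m (hm : m ≤ n0), Hf t (Nat.pair a m) = some (V m, W m) ∧
        Agr A D t (W m) ∧ V m ∈ f (Nat.pair a m) := by
      intro m hm
      obtain ⟨h1, h2⟩ := hTVW m hm
      have := hf.1 (T m) _ (V m) (W m) h1 h2
      exact ⟨this.2 t (hTle m hm), agr_mono hDmono (hTle m hm) h2, this.1⟩
    have hVn0 : V n0 = 0 := by
      have := (hstable n0 le_rfl).2.2
      exact Part.mem_unique this h0
    have hbuild : ∀ m < n0, ∃ v u, Hf t (Nat.pair a m) = some (v, u) ∧ v ≠ 0 ∧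
        Agr A D t u := by
      intro m hm
      obtain ⟨h1, h2, h3⟩ := hstable m (le_of_lt hm)
      obtain ⟨w, hw, hwne⟩ := hbel m hm
      have : V m = w := Part.mem_unique h3 hw
      exact ⟨V m, W m, h1, this ▸ hwne, h2⟩
    obtain ⟨U, hU1, hU2⟩ := riter_build hbuild
      (by rw [(hstable n0 le_rfl).1, hVn0]) (hstable n0 le_rfl).2.1
    refine ⟨t, n0, U, ?_, hU2⟩
    have habs := riter_absorb hU1 t (le_trans (Nat.succ_le_succ (Nat.le_refl n0))
      (le_max_left _ _))
    unfold rfindH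
    rw [habs]; rfl

end RfindApprox


section Prim

open Primrec

lemma pairH_primrec {Hf Hg : ℕ → ℕ → Option (ℕ × ℕ)}
    (hf : Primrec₂ Hf) (hg : Primrec₂ Hg) : Primrec₂ (pairH Hf Hg) := by
  unfold pairH
  exact (Primrec.option_bind (hf.comp Primrec.fst Primrec.snd)
    ((Primrec.option_map
      (hg.comp (Primrec.fst.comp Primrec.fst) (Primrec.snd.comp Primrec.fst))
      (((Primrec₂.natPair.comp
          (Primrec.fst.comp (Primrec.snd.comp Primrec.fst))
          (Primrec.fst.comp Primrec.snd)).pair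
        (Primrec.nat_max.comp
          (Primrec.snd.comp (Primrec.snd.comp Primrec.fst))
          (Primrec.snd.comp Primrec.snd))).to₂)).to₂)).to₂

lemma compH_primrec {Hf Hg : ℕ → ℕ → Option (ℕ × ℕ)}
    (hf : Primrec₂ Hf) (hg : Primrec₂ Hg) : Primrec₂ (compH Hf Hg) := by
  unfold compH
  exact (Primrec.option_bind (hg.comp Primrec.fst Primrec.snd)
    ((Primrec.option_map
      (hf.comp (Primrec.fst.comp Primrec.fst) (Primrec.fst.comp Primrec.snd))
      (((Primrec.fst.comp Primrec.snd).pair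
        (Primrec.nat_max.comp
          (Primrec.snd.comp (Primrec.snd.comp Primrec.fst))
          (Primrec.snd.comp Primrec.snd))).to₂)).to₂)).to₂

lemma pK_eq_rec (Hf Hg : ℕ → ℕ → Option (ℕ × ℕ)) (s a n : ℕ) :
    pK Hf Hg s a n = Nat.rec (Hf s a) (fun y r => r.bind fun p =>
      (Hg s (Nat.pair a (Nat.pair y p.1))).map fun q => (q.1, max p.2 q.2)) n := by
  induction n with
  | zero => rfl
  | succ n ih => simp only [pK]; rw [ih]

lemma precH_primrec {Hf Hg : ℕ → ℕ → Option (ℕ × ℕ)}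
    (hf : Primrec₂ Hf) (hg : Primrec₂ Hg) : Primrec₂ (precH Hf Hg) := by
  have step2 : Primrec₂ fun (p : ℕ × ℕ) (yr : ℕ × Option (ℕ × ℕ)) =>
      yr.2.bind fun q => (Hg p.1 (Nat.pair p.2.unpair.1 (Nat.pair yr.1 q.1))).map
        fun w => (w.1, max q.2 w.2) :=
    (Primrec.option_bind (Primrec.snd.comp Primrec.snd)
      ((Primrec.option_map
        (hg.comp (Primrec.fst.comp (Primrec.fst.comp Primrec.fst))
          (Primrec₂.natPair.comp
            (Primrec.fst.comp (Primrec.unpair.comp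
              (Primrec.snd.comp (Primrec.fst.comp Primrec.fst))))
            (Primrec₂.natPair.comp
              (Primrec.fst.comp (Primrec.snd.comp Primrec.fst))
              (Primrec.fst.comp Primrec.snd))))
        (((Primrec.fst.comp Primrec.snd).pair
          (Primrec.nat_max.comp
            (Primrec.snd.comp (Primrec.snd.comp Primrec.fst))
            (Primrec.snd.comp Primrec.snd))).to₂)).to₂)).to₂
  have key : Primrec fun p : ℕ × ℕ => Nat.rec (motive := fun _ => Option (ℕ × ℕ))
      (Hf p.1 p.2.unpair.1)
      (fun y r => r.bind fun q =>
        (Hg p.1 (Nat.pair p.2.unpair.1 (Nat.pair y q.1))).map fun w =>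
          (w.1, max q.2 w.2))
      p.2.unpair.2 :=
    Primrec.nat_rec'
      (Primrec.snd.comp (Primrec.unpair.comp Primrec.snd))
      (hf.comp Primrec.fst (Primrec.fst.comp (Primrec.unpair.comp Primrec.snd)))
      step2
  refine Primrec₂.of_eq key.to₂ ?_
  intro s m
  show Nat.rec _ _ _ = precH Hf Hg s m
  rw [precH, pK_eq_rec]

end Prim


section PrimRfind

lemma rstep_eq (Hf : ℕ → ℕ → Option (ℕ × ℕ)) (s a n : ℕ)
    (st : ℕ ⊕ Option (ℕ × ℕ)) :
    rstep Hf s a n st = Sum.casesOn st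
      (fun umax => Option.casesOn (Hf s (Nat.pair a n)) (Sum.inr none)
        fun q => if q.1 = 0 then Sum.inr (some (n, max umax q.2))
          else Sum.inl (max umax q.2))
      (fun r => Sum.inr r) := by
  cases st with
  | inl umax =>
    cases h : Hf s (Nat.pair a n) with
    | none => simp [rstep, h]
    | some q => by_cases hq : q.1 = 0 <;> simp [rstep, h, hq]
  | inr r => rfl

lemma riter_eq_rec (Hf : ℕ → ℕ → Option (ℕ × ℕ)) (s a k : ℕ) :
    riter Hf s a k = Nat.rec (motive := fun _ => ℕ ⊕ Option (ℕ × ℕ))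
      (Sum.inl 0) (fun n st => rstep Hf s a n st) k := by
  induction k with
  | zero => rfl
  | succ k ih => simp only [riter]; rw [ih]

abbrev RSt : Type := ℕ ⊕ Option (ℕ × ℕ)

lemma rfindH_primrec {Hf : ℕ → ℕ → Option (ℕ × ℕ)}
    (hHf : Primrec₂ Hf) : Primrec₂ (rfindH Hf) := by
  have g2 : Primrec fun z : (((ℕ × ℕ) × (ℕ × RSt)) × ℕ) × (ℕ × ℕ) =>
      (if z.2.1 = 0 then Sum.inr (some (z.1.1.2.1, max z.1.2 z.2.2))
        else Sum.inl (max z.1.2 z.2.2) : RSt) :=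
    Primrec.ite
      (Primrec.eq.comp (Primrec.fst.comp Primrec.snd) (Primrec.const 0))
      (Primrec.sumInr.comp (Primrec.option_some.comp
        ((Primrec.fst.comp (Primrec.snd.comp (Primrec.fst.comp Primrec.fst))).pair
          (Primrec.nat_max.comp (Primrec.snd.comp Primrec.fst)
            (Primrec.snd.comp Primrec.snd)))))
      (Primrec.sumInl.comp
        (Primrec.nat_max.comp (Primrec.snd.comp Primrec.fst)
          (Primrec.snd.comp Primrec.snd)))
  have gbr : Primrec fun y : ((ℕ × ℕ) × (ℕ × RSt)) × ℕ =>
      (Option.casesOn (Hf y.1.1.1 (Nat.pair y.1.1.2 y.1.2.1)) (Sum.inr none)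
        (fun q => if q.1 = 0 then Sum.inr (some (y.1.2.1, max y.2 q.2))
          else Sum.inl (max y.2 q.2)) : RSt) :=
    Primrec.option_casesOn
      (hHf.comp (Primrec.fst.comp (Primrec.fst.comp Primrec.fst))
        (Primrec₂.natPair.comp
          (Primrec.snd.comp (Primrec.fst.comp Primrec.fst))
          (Primrec.fst.comp (Primrec.snd.comp Primrec.fst))))
      (Primrec.const (Sum.inr none))
      g2.to₂
  have hbr : Primrec fun y : ((ℕ × ℕ) × (ℕ × RSt)) × Option (ℕ × ℕ) =>
      (Sum.inr y.2 : RSt) := Primrec.sumInr.comp Primrec.snd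
  have built : Primrec fun x : (ℕ × ℕ) × (ℕ × RSt) =>
      (Sum.casesOn x.2.2
        (fun umax => Option.casesOn (Hf x.1.1 (Nat.pair x.1.2 x.2.1)) (Sum.inr none)
          (fun q => if q.1 = 0 then Sum.inr (some (x.2.1, max umax q.2))
            else Sum.inl (max umax q.2)))
        (fun r => Sum.inr r) : RSt) :=
    Primrec.sumCasesOn (Primrec.snd.comp Primrec.snd) gbr.to₂ hbr.to₂
  have step2 : Primrec₂ fun (p : ℕ × ℕ) (nst : ℕ × RSt) =>
      rstep Hf p.1 p.2 nst.1 nst.2 := by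
    refine Primrec₂.of_eq built.to₂ ?_
    intro p nst
    rw [rstep_eq]
  have key : Primrec fun p : ℕ × ℕ => Nat.rec (motive := fun _ => RSt)
      (Sum.inl 0) (fun n st => rstep Hf p.1 p.2 n st) p.1 :=
    Primrec.nat_rec' Primrec.fst (Primrec.const (Sum.inl 0)) step2
  have final : Primrec fun p : ℕ × ℕ =>
      (Sum.casesOn (Nat.rec (motive := fun _ => RSt)
        (Sum.inl 0) (fun n st => rstep Hf p.1 p.2 n st) p.1)
        (fun _ => none) (fun r => r) : Option (ℕ × ℕ)) :=
    Primrec.sumCasesOn key (Primrec.const none).to₂ Primrec.snd.to₂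
  refine Primrec₂.of_eq final.to₂ ?_
  intro s a
  show (Sum.casesOn (Nat.rec _ _ _) _ _ : Option (ℕ × ℕ)) = rfindH Hf s a
  rw [rfindH, ← riter_eq_rec]
  cases riter Hf s a s <;> rfl

end PrimRfind


section Main

variable {A : Set ℕ} {D : ℕ → ℕ → Bool}

theorem exists_approx (hDprim : Primrec₂ D)
    (hDsub : ∀ s n, D s n = true → n ∈ A)
    (hDmono : ∀ s s' n, s ≤ s' → D s n = true → D s' n = true)
    (hDcompl : ∀ n, n ∈ A → ∃ s, D s n = true)
    {h : ℕ →. ℕ} (hh : RecursiveInOracle (chi A) h) :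
    ∃ H : ℕ → ℕ → Option (ℕ × ℕ), Primrec₂ H ∧ IsApprox A D h H := by
  induction hh with
  | oracle =>
    refine ⟨fun s n => some (cond (D s n) 1 0, n + 1), ?_, ?_⟩
    · exact (Primrec.option_some.comp
        (((Primrec.cond (hDprim.comp Primrec.fst Primrec.snd)
          (Primrec.const 1) (Primrec.const 0))).pair
          (Primrec.succ.comp Primrec.snd))).to₂
    · exact isApprox_oracle hDsub hDmono hDcompl
  | zero =>
    exact ⟨fun _ _ => some (0, 0), Primrec.const _ |>.to₂, isApprox_zero⟩
  | succ =>
    refine ⟨fun _ n => some (n.succ, 0), ?_, isApprox_total Nat.succ⟩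
    exact (Primrec.option_some.comp
      ((Primrec.succ.comp Primrec.snd).pair (Primrec.const 0))).to₂
  | left =>
    refine ⟨fun _ n => some (n.unpair.1, 0), ?_, isApprox_total _⟩
    exact (Primrec.option_some.comp
      ((Primrec.fst.comp (Primrec.unpair.comp Primrec.snd)).pair
        (Primrec.const 0))).to₂
  | right =>
    refine ⟨fun _ n => some (n.unpair.2, 0), ?_, isApprox_total _⟩
    exact (Primrec.option_some.comp
      ((Primrec.snd.comp (Primrec.unpair.comp Primrec.snd)).pair
        (Primrec.const 0))).to₂
  | pair hf hg ihf ihg =>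
    obtain ⟨Hf, hfp, hfa⟩ := ihf
    obtain ⟨Hg, hgp, hga⟩ := ihg
    exact ⟨pairH Hf Hg, pairH_primrec hfp hgp, isApprox_pair hDmono hfa hga⟩
  | comp hf hg ihf ihg =>
    obtain ⟨Hf, hfp, hfa⟩ := ihf
    obtain ⟨Hg, hgp, hga⟩ := ihg
    exact ⟨compH Hf Hg, compH_primrec hfp hgp, isApprox_comp hDmono hfa hga⟩
  | prec hf hg ihf ihg =>
    obtain ⟨Hf, hfp, hfa⟩ := ihf
    obtain ⟨Hg, hgp, hga⟩ := ihg
    exact ⟨precH Hf Hg, precH_primrec hfp hgp, isApprox_prec hDmono hfa hga⟩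
  | rfind hf ihf =>
    obtain ⟨Hf, hfp, hfa⟩ := ihf
    exact ⟨rfindH Hf, rfindH_primrec hfp, isApprox_rfind hDmono hfa⟩

end Main

/-- Every (plain) partial computable function is computable in any oracle. -/
theorem recursiveIn_of_partrec {O : ℕ →. ℕ} {f : ℕ →. ℕ} (hf : Nat.Partrec f) :
    RecursiveInOracle O f := by
  induction hf with
  | zero => exact RecursiveInOracle.zero
  | succ => exact RecursiveInOracle.succ
  | left => exact RecursiveInOracle.left
  | right => exact RecursiveInOracle.right
  | pair _ _ ihf ihg => exact RecursiveInOracle.pair ihf ihg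
  | comp _ _ ihf ihg => exact RecursiveInOracle.comp ihf ihg
  | prec _ _ ihf ihg => exact RecursiveInOracle.prec ihf ihg
  | rfind _ ihf => exact RecursiveInOracle.rfind ihf

theorem recursiveIn_of_eq {O f g : ℕ →. ℕ} (h : RecursiveInOracle O f)
    (H : ∀ n, f n = g n) : RecursiveInOracle O g := (funext H : f = g) ▸ h


open Nat.Partrec (Code)
open Nat.Partrec.Code

/-- The parametrized recursion theorem modulo a precomplete numbering: for every
partial computable `Ψ` (of a pair) there is a computable `ν` such that `ν x` is a
`γ`-fixed point of `Ψ (x, ·)` wherever defined. -/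
theorem nu_exists {S : Type*} (γ : ℕ → S) (hpre : Precomplete γ)
    {Ψ : ℕ →. ℕ} (hΨ : Nat.Partrec Ψ) :
    ∃ ν : ℕ → ℕ, Computable ν ∧
      ∀ x y, y ∈ Ψ (Nat.pair x (ν x)) → γ (ν x) = γ y := by
  have hd : Nat.Partrec fun m : ℕ => phi m.unpair.1 m := by
    refine Partrec.nat_iff.mp ?_
    exact Nat.Partrec.Code.eval_part.comp
      ((Computable.ofNat Code).comp
        (Computable.fst.comp Computable.unpair))
      Computable.id
  obtain ⟨tt, htt_comp, htt⟩ := hpre _ hd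
  have hq : Nat.Partrec fun z : ℕ => Ψ (Nat.pair z.unpair.1 (tt z.unpair.2)) := by
    refine Partrec.nat_iff.mp ?_
    exact (Partrec.nat_iff.mpr hΨ).comp
      (Primrec₂.natPair.to_comp.comp
        (Computable.fst.comp Computable.unpair)
        (htt_comp.comp (Computable.snd.comp Computable.unpair)))
  obtain ⟨cq, hcq⟩ := Nat.Partrec.Code.exists_code.1 hq
  have he : Computable fun x : ℕ => Encodable.encode (cq.curry x) :=
    (Primrec.encode.comp (Nat.Partrec.Code.primrec₂_curry.comp
      (Primrec.const cq) Primrec.id)).to_comp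
  refine ⟨fun x => tt (Nat.pair (Encodable.encode (cq.curry x)) x),
    htt_comp.comp (Primrec₂.natPair.to_comp.comp he Computable.id), ?_⟩
  intro x y hy
  set m : ℕ := Nat.pair (Encodable.encode (cq.curry x)) x with hm
  have hdm : phi m.unpair.1 m = Ψ (Nat.pair x (tt m)) := by
    rw [hm, Nat.unpair_pair]
    show (Denumerable.ofNat Code (Encodable.encode (cq.curry x))).eval m = _
    rw [Denumerable.ofNat_encode, Nat.Partrec.Code.eval_curry, hcq]
    show Ψ (Nat.pair ((Nat.pair x m).unpair.1) (tt ((Nat.pair x m).unpair.2))) = _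
    rw [Nat.unpair_pair]
  exact htt m y (by rw [hdm]; exact hy)


/-- Sum of `c q` for `q < u`. -/
def csum (c : ℕ → ℕ) : ℕ → ℕ
  | 0 => 0
  | u + 1 => c u + csum c u

lemma recIn_sum (A : Set ℕ) (c : ℕ → ℕ) (hc : ∀ q, chi A q = Part.some (c q)) :
    RecursiveInOracle (chi A) (fun m => Part.some (csum c m.unpair.2)) := by
  have proj1 : Nat.Partrec ↑(fun m : ℕ => m.unpair.2.unpair.1) :=
    Partrec.nat_iff.mp (Computable.fst.comp (Computable.unpair.comp
      (Computable.snd.comp Computable.unpair)))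
  have proj2 : Nat.Partrec ↑(fun m : ℕ => m.unpair.2.unpair.2) :=
    Partrec.nat_iff.mp (Computable.snd.comp (Computable.unpair.comp
      (Computable.snd.comp Computable.unpair)))
  have haddc : Nat.Partrec ↑(fun z : ℕ => z.unpair.1 + z.unpair.2) :=
    Partrec.nat_iff.mp (Primrec.nat_add.to_comp.comp
      (Computable.fst.comp Computable.unpair)
      (Computable.snd.comp Computable.unpair))
  have hleft : RecursiveInOracle (chi A) (fun m : ℕ => chi A m.unpair.2.unpair.1) := by
    refine recursiveIn_of_eq (RecursiveInOracle.comp RecursiveInOracle.oracle (recursiveIn_of_partrec proj1)) ?_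
    intro n
    simp [PFun.coe_val, Part.bind_eq_bind, Part.bind_some]
    exact Part.bind_some _ _
  have hstep := RecursiveInOracle.comp (recursiveIn_of_partrec haddc)
    (RecursiveInOracle.pair hleft (recursiveIn_of_partrec proj2))
  have hprec := RecursiveInOracle.prec RecursiveInOracle.zero hstep
  refine recursiveIn_of_eq hprec ?_
  intro m
  simp only [Nat.unpaired]
  generalize m.unpair.1 = a
  generalize m.unpair.2 = u
  induction u with
  | zero => rfl
  | succ u ih =>
    show (Nat.rec _ _ u : Part ℕ).bind _ = _
    rw [ih, Part.bind_some]
    simp [Seq.seq, hc, PFun.coe_val, Part.bind_some, Nat.unpair_pair, csum]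
    refine (Part.bind_some _ _).trans ?_
    simp [PFun.coe_val, Nat.unpair_pair]

lemma recIn_reduction (A : Set ℕ) (c : ℕ → ℕ) (hc : ∀ q, chi A q = Part.some (c q))
    (w : ℕ → ℕ) (hw : Computable w) (b : ℕ → ℕ → ℕ) (hb : Computable₂ b)
    (fin : ℕ → ℕ → ℕ) (hfin : Computable₂ fin) :
    RecursiveInOracle (chi A) (fun x =>
      (Nat.rfind fun t => (fun m => m = 0) <$>
        Part.some (b (Nat.pair x t) (csum c (w (Nat.pair x t))))) >>=
        fun t => Part.some (fin x t)) := by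
  have hsum := recIn_sum A c hc
  have hw' : Nat.Partrec ↑(fun p : ℕ => Nat.pair 0 (w p)) :=
    Partrec.nat_iff.mp (Primrec₂.natPair.to_comp.comp (Computable.const 0) hw)
  have hsumAt : RecursiveInOracle (chi A) (fun p => Part.some (csum c (w p))) := by
    refine recursiveIn_of_eq (RecursiveInOracle.comp hsum (recursiveIn_of_partrec hw')) ?_
    intro p
    simp [PFun.coe_val, Part.bind_eq_bind, Part.bind_some, Nat.unpair_pair]
  have hid : RecursiveInOracle (chi A) ↑(fun p : ℕ => p) :=
    recursiveIn_of_partrec (Partrec.nat_iff.mp Computable.id)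
  have hbhat : Nat.Partrec ↑(fun z : ℕ => b z.unpair.1 z.unpair.2) :=
    Partrec.nat_iff.mp (hb.comp (Computable.fst.comp Computable.unpair)
      (Computable.snd.comp Computable.unpair))
  have htest : RecursiveInOracle (chi A) (fun p => Part.some (b p (csum c (w p)))) := by
    refine recursiveIn_of_eq (RecursiveInOracle.comp (recursiveIn_of_partrec hbhat)
      (RecursiveInOracle.pair hid hsumAt)) ?_
    intro p
    rw [PFun.coe_val]
    simp [Seq.seq, PFun.coe_val, Part.bind_some, Nat.unpair_pair]
    refine (Part.bind_some _ _).trans ?_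
    simp [PFun.coe_val, Nat.unpair_pair]
  have hTT := RecursiveInOracle.rfind htest
  have hfinhat : Nat.Partrec ↑(fun z : ℕ => fin z.unpair.1 z.unpair.2) :=
    Partrec.nat_iff.mp (hfin.comp (Computable.fst.comp Computable.unpair)
      (Computable.snd.comp Computable.unpair))
  have hfinal := RecursiveInOracle.comp (recursiveIn_of_partrec hfinhat)
    (RecursiveInOracle.pair hid hTT)
  refine recursiveIn_of_eq hfinal ?_
  intro x
  apply Part.ext
  intro y
  constructor
  · intro hy
    replace hy := Part.mem_bind_iff.mp hy
    obtain ⟨z, hz, hy⟩ := hy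
    obtain ⟨xx, hxx, t, ht, hzval⟩ := mem_pairSeq.mp hz
    rw [PFun.coe_val, Part.mem_some_iff] at hxx
    rw [PFun.coe_val, Part.mem_some_iff] at hy
    refine Part.mem_bind_iff.mpr ?_
    refine ⟨t, ht, ?_⟩
    rw [Part.mem_some_iff, hy, ← hzval, hxx, Nat.unpair_pair]
  · intro hy
    replace hy := Part.mem_bind_iff.mp hy
    obtain ⟨t, ht, hy⟩ := hy
    rw [Part.mem_some_iff] at hy
    refine Part.mem_bind_iff.mpr ?_
    refine ⟨Nat.pair x t, mem_pairSeq.mpr ⟨x, by rw [PFun.coe_val]; exact Part.mem_some x, t, ht, rfl⟩, ?_⟩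
    rw [PFun.coe_val, Part.mem_some_iff, Nat.unpair_pair]
    exact hy


lemma csum_eq_rec (c : ℕ → ℕ) (u : ℕ) :
    csum c u = Nat.rec 0 (fun q acc => c q + acc) u := by
  induction u with
  | zero => rfl
  | succ u ih => simp only [csum]; rw [ih]

end ArslanovProof

open ArslanovProof

/-- Arslanov's completeness criterion for precomplete numberings: if `A` is a c.e. set
to which the halting set is not Turing reducible, then every total `A`-computable
function has a fixed point modulo `~γ`. -/
theorem arslanov_precomplete {S : Type*} (γ : ℕ → S) (hsurj : Function.Surjective γ)
    (hpre : Precomplete γ) (A : Set ℕ) (hA : CE A)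
    (hinc : ¬ RecursiveInOracle (chi A) (chi haltingSet))
    (g : ℕ → ℕ) (hg : RecursiveInOracle (chi A) (fun n => Part.some (g n))) :
    ∃ n : ℕ, γ (g n) = γ n := by
  classical
  by_contra hfix
  push_neg at hfix
  obtain ⟨ψ, hψ, hmemA⟩ := hA
  obtain ⟨cA, hcA⟩ := Nat.Partrec.Code.exists_code.1 hψ
  -- the stagewise approximation to the oracle set A
  set D : ℕ → ℕ → Bool := fun s n => (Nat.Partrec.Code.evaln s cA n).isSome with hDdef
  have hDprim : Primrec₂ D :=
    (Primrec.option_isSome.comp (Nat.Partrec.Code.primrec_evaln.comp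
      ((Primrec.fst.pair (Primrec.const cA)).pair Primrec.snd))).to₂
  have hDsub : ∀ s n, D s n = true → n ∈ A := by
    intro s n hsn
    obtain ⟨v, hv⟩ := Option.isSome_iff_exists.mp hsn
    have hv' : v ∈ Nat.Partrec.Code.eval cA n :=
      Nat.Partrec.Code.evaln_sound (Option.mem_def.mpr hv)
    rw [hcA] at hv'
    exact (hmemA n).mpr (Part.dom_iff_mem.mpr ⟨v, hv'⟩)
  have hDmono : ∀ s s' n, s ≤ s' → D s n = true → D s' n = true := by
    intro s s' n hss hsn
    obtain ⟨v, hv⟩ := Option.isSome_iff_exists.mp hsn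
    exact Option.isSome_iff_exists.mpr
      ⟨v, Nat.Partrec.Code.evaln_mono hss (Option.mem_def.mpr hv)⟩
  have hDcompl : ∀ n, n ∈ A → ∃ s, D s n = true := by
    intro n hn
    have := (hmemA n).mp hn
    obtain ⟨v, hv⟩ := Part.dom_iff_mem.mp this
    rw [← hcA] at hv
    obtain ⟨k, hk⟩ := Nat.Partrec.Code.evaln_complete.mp hv
    exact ⟨k, Option.isSome_iff_exists.mpr ⟨v, hk⟩⟩
  obtain ⟨G, hGprim, hGsound, hGcompl⟩ := exists_approx hDprim hDsub hDmono hDcompl hg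
  -- stage approximation to the halting problem
  set K : ℕ → ℕ → Bool := fun x s =>
    (Nat.Partrec.Code.evaln s (Denumerable.ofNat Nat.Partrec.Code x) x).isSome with hKdef
  have hKprim : Primrec₂ K :=
    (Primrec.option_isSome.comp (Nat.Partrec.Code.primrec_evaln.comp
      ((Primrec.snd.pair ((Primrec.ofNat _).comp Primrec.fst)).pair Primrec.fst))).to₂
  have hKmono : ∀ x s s', s ≤ s' → K x s = true → K x s' = true := by
    intro x s s' hss h
    obtain ⟨v, hv⟩ := Option.isSome_iff_exists.mp h
    exact Option.isSome_iff_exists.mpr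
      ⟨v, Nat.Partrec.Code.evaln_mono hss (Option.mem_def.mpr hv)⟩
  have hKhalt : ∀ x, x ∈ haltingSet ↔ ∃ s, K x s = true := by
    intro x
    constructor
    · intro hx
      obtain ⟨v, hv⟩ := Part.dom_iff_mem.mp hx
      obtain ⟨k, hk⟩ := Nat.Partrec.Code.evaln_complete.mp hv
      exact ⟨k, Option.isSome_iff_exists.mpr ⟨v, hk⟩⟩
    · rintro ⟨s, hs⟩
      obtain ⟨v, hv⟩ := Option.isSome_iff_exists.mp hs
      exact Part.dom_iff_mem.mpr ⟨v, Nat.Partrec.Code.evaln_sound (Option.mem_def.mpr hv)⟩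
  -- the partial computable function Ψ₂
  set stage : ℕ →. ℕ := fun x => Nat.rfind fun s => Part.some (K x s) with hstagedef
  set Ψ₂ : ℕ →. ℕ :=
    fun m => (stage m.unpair.1).bind fun s => ↑((G s m.unpair.2).map Prod.fst)
    with hΨ₂def
  have hΨ₂ : Nat.Partrec Ψ₂ := by
    rw [← Partrec.nat_iff]
    have hst : Partrec stage := by
      refine Partrec.rfind ?_
      exact (hKprim.to_comp).partrec₂
    refine Partrec.bind (hst.comp (Computable.fst.comp Computable.unpair)) ?_
    have hopt : Computable fun p : ℕ × ℕ => (G p.2 p.1.unpair.2).map Prod.fst :=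
      ((Primrec.option_map (hGprim.comp Primrec.snd
          (Primrec.snd.comp (Primrec.unpair.comp Primrec.fst)))
        (Primrec.fst.comp Primrec.snd).to₂)).to_comp
    exact (Computable.ofOption hopt).to₂
  obtain ⟨ν, hνc, hν⟩ := nu_exists γ hpre hΨ₂
  -- the reduction pieces
  set c : ℕ → ℕ := fun q => if q ∈ A then 1 else 0 with hcdef
  have hc : ∀ q, chi A q = Part.some (c q) := fun q => rfl
  set dsum : ℕ → ℕ → ℕ := fun t u => csum (fun q => cond (D t q) 1 0) u with hdsumdef
  have hdsumc : Primrec₂ dsum := by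
    have key : Primrec fun p : ℕ × ℕ => Nat.rec (motive := fun _ => ℕ) 0
        (fun q acc => (cond (D p.1 q) 1 0) + acc) p.2 :=
      Primrec.nat_rec' Primrec.snd (Primrec.const 0)
        ((Primrec.nat_add.comp
          (Primrec.cond (hDprim.comp (Primrec.fst.comp Primrec.fst)
              (Primrec.fst.comp Primrec.snd))
            (Primrec.const 1) (Primrec.const 0))
          (Primrec.snd.comp Primrec.snd)).to₂)
    refine Primrec₂.of_eq key.to₂ ?_
    intro t u
    exact (csum_eq_rec (fun q => cond (D t q) 1 0) u).symm
  set w : ℕ → ℕ := fun p =>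
    Option.casesOn (G p.unpair.2 (ν p.unpair.1)) 0 Prod.snd with hwdef
  have hGo : Computable fun p : ℕ => G p.unpair.2 (ν p.unpair.1) :=
    hGprim.to_comp.comp (Computable.snd.comp Computable.unpair)
      (hνc.comp (Computable.fst.comp Computable.unpair))
  have hwc : Computable w :=
    Computable.option_casesOn hGo (Computable.const 0)
      (Computable.snd.comp Computable.snd).to₂
  set b : ℕ → ℕ → ℕ := fun p cs =>
    cond ((G p.unpair.2 (ν p.unpair.1)).isSome)
      (cond (decide (cs = dsum p.unpair.2 (w p))) 0 1) 1 with hbdef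
  have hbc : Computable₂ b := by
    have hbeq : Computable fun z : ℕ × ℕ =>
        decide (z.2 = dsum z.1.unpair.2 (w z.1)) :=
      (Primrec.eq.decide.to_comp).comp Computable.snd
        (hdsumc.to_comp.comp
          (Computable.snd.comp (Computable.unpair.comp Computable.fst))
          (hwc.comp Computable.fst))
    exact (Computable.cond
      ((Primrec.option_isSome.to_comp).comp (hGo.comp Computable.fst))
      (Computable.cond hbeq (Computable.const 0) (Computable.const 1))
      (Computable.const 1)).to₂
  set fin : ℕ → ℕ → ℕ := fun x t => cond (K x t) 1 0 with hfindef
  have hfinc : Computable₂ fin :=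
    (Computable.cond (hKprim.to_comp.comp Computable.fst Computable.snd)
      (Computable.const 1) (Computable.const 0)).to₂
  have hred := recIn_reduction A c hc w hwc b hbc fin hfinc
  -- the combinatorial equivalence between sum equality and agreement
  have hterm : ∀ t q, ((cond (D t q) 1 0 : ℕ) = c q) ↔ (q ∈ A → D t q = true) := by
    intro t q
    by_cases hq : q ∈ A
    · cases hD : D t q with
      | true => simp [hcdef, hq, hD]
      | false => simp [hcdef, hq, hD]
    · cases hD : D t q with
      | true => exact absurd (hDsub t q hD) hq
      | false => simp [hcdef, hq, hD]
  have htermle : ∀ t q, (cond (D t q) 1 0 : ℕ) ≤ c q := by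
    intro t q
    cases hD : D t q with
    | true => simp [hcdef, hDsub t q hD]
    | false => simp
  have hsumle : ∀ t u, dsum t u ≤ csum c u := by
    intro t u
    induction u with
    | zero => exact le_refl 0
    | succ u ih =>
      show cond (D t u) 1 0 + dsum t u ≤ c u + csum c u
      exact Nat.add_le_add (htermle t u) ih
  have hsum_iff : ∀ t u, (csum c u = dsum t u ↔ Agr A D t u) := by
    intro t u
    induction u with
    | zero => exact iff_of_true rfl (agr_zero t)
    | succ u ih =>
      constructor
      · intro h
        have h' : c u + csum c u = cond (D t u) 1 0 + dsum t u := h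
        have e1 := htermle t u
        have e2 := hsumle t u
        have h1 : csum c u = dsum t u := by omega
        have h2 : (cond (D t u) 1 0 : ℕ) = c u := by omega
        intro q hq hqA
        rcases Nat.lt_succ_iff_lt_or_eq.mp hq with hlt | rfl
        · exact (ih.mp h1) q hlt hqA
        · exact (hterm t q).mp h2 hqA
      · intro hAg
        have e1 : csum c u = dsum t u := ih.mpr (agr_anti (Nat.le_succ u) hAg)
        have e2 : (cond (D t u) 1 0 : ℕ) = c u :=
          (hterm t u).mpr (fun hq => hAg u (Nat.lt_succ_self u) hq)
        show c u + csum c u = cond (D t u) 1 0 + dsum t u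
        omega
  -- analysis of the search predicate
  have hP : ∀ x t, (b (Nat.pair x t) (csum c (w (Nat.pair x t))) = 0 ↔
      ∃ v u, G t (ν x) = some (v, u) ∧ Agr A D t u) := by
    intro x t
    cases hG : G t (ν x) with
    | none =>
      apply iff_of_false
      · simp [hbdef, hwdef, Nat.unpair_pair, hG]
      · rintro ⟨v, u, hvu, _⟩
        cases hvu
    | some p =>
      have hw : w (Nat.pair x t) = p.2 := by
        simp [hwdef, Nat.unpair_pair, hG]
      have hb' : b (Nat.pair x t) (csum c (w (Nat.pair x t))) =
          cond (decide (csum c p.2 = dsum t p.2)) 0 1 := by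
        simp [hbdef, Nat.unpair_pair, hG, hw]
      rw [hb']
      by_cases hcd : csum c p.2 = dsum t p.2
      · apply iff_of_true
        · simp [hcd]
        · exact ⟨p.1, p.2, rfl, (hsum_iff t p.2).mp hcd⟩
      · apply iff_of_false
        · simp [hcd]
        · rintro ⟨v, u, hvu, hAg⟩
          have hpvu : p = (v, u) := Option.some.inj hvu
          refine absurd ((hsum_iff t u).mpr hAg) ?_
          rw [hpvu] at hcd
          exact hcd
  -- the reduction function computes chi haltingSet
  have hΦeq : (fun x =>
      (Nat.rfind fun t => (fun m => m = 0) <$>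
        Part.some (b (Nat.pair x t) (csum c (w (Nat.pair x t))))) >>=
        fun t => Part.some (fin x t)) = chi haltingSet := by
    funext x
    set prd : ℕ →. Bool := fun t => (fun m => decide (m = 0)) <$>
      Part.some (b (Nat.pair x t) (csum c (w (Nat.pair x t)))) with hprd
    have hprdval : ∀ t, prd t =
        Part.some (decide (b (Nat.pair x t) (csum c (w (Nat.pair x t))) = 0)) := by
      intro t
      rw [hprd]
      simp
    have hex : ∃ t, b (Nat.pair x t) (csum c (w (Nat.pair x t))) = 0 := by
      obtain ⟨t, v, u, hGt, hAg⟩ := hGcompl (ν x) trivial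
      exact ⟨t, (hP x t).mpr ⟨v, u, hGt, hAg⟩⟩
    have hdom : (Nat.rfind prd).Dom := by
      rw [Nat.rfind_dom]
      obtain ⟨t, ht⟩ := hex
      refine ⟨t, ?_, ?_⟩
      · rw [hprdval t]
        simp [ht]
      · intro m _
        rw [hprdval m]
        trivial
    set t₀ := (Nat.rfind prd).get hdom with ht₀def
    have ht₀ : t₀ ∈ Nat.rfind prd := Part.get_mem hdom
    have hspec : b (Nat.pair x t₀) (csum c (w (Nat.pair x t₀))) = 0 := by
      have := Nat.rfind_spec ht₀
      rw [hprdval t₀] at this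
      simpa using Part.mem_some_iff.mp this
    obtain ⟨v, u, hGt₀, hAg₀⟩ := (hP x t₀).mp hspec
    have hGs := hGsound t₀ (ν x) v u hGt₀ hAg₀
    have hvg : v = g (ν x) := Part.mem_some_iff.mp hGs.1
    have hbody : ((Nat.rfind prd) >>= fun t => Part.some (fin x t)) =
        Part.some (fin x t₀) := by
      rw [Part.eq_some_iff.mpr ht₀]
      simp
    rw [show ((Nat.rfind fun t => (fun m => m = 0) <$>
        Part.some (b (Nat.pair x t) (csum c (w (Nat.pair x t))))) >>=
        fun t => Part.some (fin x t)) = ((Nat.rfind prd) >>= fun t => Part.some (fin x t))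
      from rfl, hbody]
    have hval : fin x t₀ = if x ∈ haltingSet then 1 else 0 := by
      cases hKx : K x t₀ with
      | true =>
        have hx : x ∈ haltingSet := (hKhalt x).mpr ⟨t₀, hKx⟩
        simp [hfindef, hKx, hx]
      | false =>
        have hnot : x ∉ haltingSet := by
          intro hx
          obtain ⟨s₁, hs₁⟩ := (hKhalt x).mp hx
          have hsdom : (stage x).Dom := by
            show (Nat.rfind fun s => Part.some (K x s)).Dom
            refine Nat.rfind_dom.mpr ?_
            exact ⟨s₁, Part.mem_some_iff.mpr (by simp [hs₁]), fun _ => trivial⟩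
          have hs'mem : (stage x).get hsdom ∈ Nat.rfind fun s => Part.some (K x s) :=
            Part.get_mem hsdom
          set s' := (stage x).get hsdom with hs'def
          have hs'true : K x s' = true := by
            have := Nat.rfind_spec hs'mem
            simpa using Part.mem_some_iff.mp this
          have ht₀s' : t₀ ≤ s' := by
            by_contra hlt
            push_neg at hlt
            exact absurd (hKmono x s' t₀ (le_of_lt hlt) hs'true) (by simp [hKx])
          have hGs' : G s' (ν x) = some (v, u) := hGs.2 s' ht₀s'
          have hvmem : v ∈ Ψ₂ (Nat.pair x (ν x)) := by
            show v ∈ (stage (Nat.pair x (ν x)).unpair.1).bind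
              fun s => ↑((G s (Nat.pair x (ν x)).unpair.2).map Prod.fst)
            rw [Nat.unpair_pair]
            refine Part.mem_bind_iff.mpr ⟨s', Part.get_mem hsdom, ?_⟩
            rw [hGs']
            simp [Part.mem_ofOption]
          have hγ := hν x v hvmem
          exact hfix (ν x) (by rw [← hvg, ← hγ])
        simp [hfindef, hKx, hnot]
    rw [hval]
    rfl
  rw [hΦeq] at hred
  exact hinc hred
end
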